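/- arXiv:2405.10162 — 2 statements merged into one kernel-verified Lean document; each statement's English description precedes it below -/
import Mathlib

section
/- Let S(t₁,t₂,q) = t₁²t₂ + δ t₂^{μ-1} + q_{μ-1} t₂^{μ-2} + ⋯ + q₃ t₂², with δ = ±1 and μ ≥ 4, and define the map f(t,q) = (x,q,u) with x₁ = -∂S/∂t₁, x₂ = -∂S/∂t₂, u = S - t₁ ∂S/∂t₁ - t₂ ∂S/∂t₂. If f(t,q) = (x,q,u) and t₂ ≠ 0, then t₁ = -x₁/(2t₂) and t₂ is a root of multiplicity at least 2 of the polynomial P(T) = δ T^μ + q_{μ-1} T^{μ-1} + ⋯ + q₃ T³ + x₂ T² - u T - x₁²/4. -/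
open Finset

/-- Lemma 1, case t₂ ≠ 0: for the D_μ^δ generating family
`S = t₁²t₂ + δ t₂^(μ-1) + q_{μ-1} t₂^(μ-2) + ⋯ + q₃ t₂²`,
any preimage with `t₂ ≠ 0` satisfies `t₁ = -x₁/(2t₂)` and `t₂` is a root of
multiplicity at least 2 of `P(T) = δT^μ + q_{μ-1}T^(μ-1) + ⋯ + q₃T³ + x₂T² - uT - x₁²/4`. -/
theorem stmt0 (μ : ℕ) (hμ : 4 ≤ μ) (δ : ℝ) (hδ : δ = 1 ∨ δ = -1)
    (q : ℕ → ℝ) (t₁ t₂ x₁ x₂ u : ℝ)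
    (S : ℝ → ℝ → ℝ)
    (hS : ∀ s₁ s₂ : ℝ, S s₁ s₂ =
      s₁ ^ 2 * s₂ + δ * s₂ ^ (μ - 1) + ∑ i ∈ Finset.Icc 3 (μ - 1), q i * s₂ ^ (i - 1))
    (P : ℝ → ℝ)
    (hP : ∀ T : ℝ, P T =
      δ * T ^ μ + ∑ i ∈ Finset.Icc 3 (μ - 1), q i * T ^ i + x₂ * T ^ 2 - u * T - x₁ ^ 2 / 4)
    (hx₁ : x₁ = -deriv (fun s => S s t₂) t₁)
    (hx₂ : x₂ = -deriv (fun s => S t₁ s) t₂)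
    (hu : u = S t₁ t₂ - t₁ * deriv (fun s => S s t₂) t₁ - t₂ * deriv (fun s => S t₁ s) t₂)
    (ht₂ : t₂ ≠ 0) :
    t₁ = -x₁ / (2 * t₂) ∧ P t₂ = 0 ∧ deriv P t₂ = 0 := by
  have hd1 : HasDerivAt (fun s => S s t₂) (2 * t₁ * t₂) t₁ := by
    have heq : (fun s => S s t₂) = fun s => s ^ 2 * t₂ +
        (δ * t₂ ^ (μ - 1) + ∑ i ∈ Finset.Icc 3 (μ - 1), q i * t₂ ^ (i - 1)) := by
      funext s; rw [hS]; ring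
    rw [heq]
    have h := ((hasDerivAt_pow 2 t₁).mul_const t₂).add_const
      (δ * t₂ ^ (μ - 1) + ∑ i ∈ Finset.Icc 3 (μ - 1), q i * t₂ ^ (i - 1))
    refine h.congr_deriv ?_
    push_cast; ring
  have hd2 : HasDerivAt (fun s => S t₁ s)
      (t₁ ^ 2 + δ * (((μ - 1 : ℕ) : ℝ) * t₂ ^ (μ - 1 - 1)) +
        ∑ i ∈ Finset.Icc 3 (μ - 1), q i * (((i - 1 : ℕ) : ℝ) * t₂ ^ (i - 1 - 1))) t₂ := by
    have heq : (fun s => S t₁ s) = fun s => t₁ ^ 2 * s + δ * s ^ (μ - 1) +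
        ∑ i ∈ Finset.Icc 3 (μ - 1), q i * s ^ (i - 1) := by
      funext s; rw [hS]
    rw [heq]
    have h1 : HasDerivAt (fun s : ℝ => t₁ ^ 2 * s) (t₁ ^ 2) t₂ := by
      simpa using (hasDerivAt_id t₂).const_mul (t₁ ^ 2)
    have h2 : HasDerivAt (fun s : ℝ => δ * s ^ (μ - 1))
        (δ * (((μ - 1 : ℕ) : ℝ) * t₂ ^ (μ - 1 - 1))) t₂ :=
      (hasDerivAt_pow (μ - 1) t₂).const_mul δ
    have h3 : HasDerivAt (fun s : ℝ => ∑ i ∈ Finset.Icc 3 (μ - 1), q i * s ^ (i - 1))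
        (∑ i ∈ Finset.Icc 3 (μ - 1), q i * (((i - 1 : ℕ) : ℝ) * t₂ ^ (i - 1 - 1))) t₂ :=
      HasDerivAt.fun_sum fun i _ => (hasDerivAt_pow (i - 1) t₂).const_mul (q i)
    exact (h1.add h2).add h3
  have hx₁' : x₁ = -(2 * t₁ * t₂) := by rw [hx₁, hd1.deriv]
  have hx₂' : x₂ = -(t₁ ^ 2 + δ * (((μ - 1 : ℕ) : ℝ) * t₂ ^ (μ - 1 - 1)) +
      ∑ i ∈ Finset.Icc 3 (μ - 1), q i * (((i - 1 : ℕ) : ℝ) * t₂ ^ (i - 1 - 1))) := by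
    rw [hx₂, hd2.deriv]
  have hu' : u = (t₁ ^ 2 * t₂ + δ * t₂ ^ (μ - 1) + ∑ i ∈ Finset.Icc 3 (μ - 1), q i * t₂ ^ (i - 1))
      - t₁ * (2 * t₁ * t₂) - t₂ * (t₁ ^ 2 + δ * (((μ - 1 : ℕ) : ℝ) * t₂ ^ (μ - 1 - 1)) +
        ∑ i ∈ Finset.Icc 3 (μ - 1), q i * (((i - 1 : ℕ) : ℝ) * t₂ ^ (i - 1 - 1))) := by
    rw [hu, hd1.deriv, hd2.deriv, hS]
  have hdP : HasDerivAt P (δ * ((μ : ℝ) * t₂ ^ (μ - 1)) +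
      ∑ i ∈ Finset.Icc 3 (μ - 1), q i * ((i : ℝ) * t₂ ^ (i - 1)) + x₂ * (2 * t₂) - u) t₂ := by
    have heq : P = fun T => δ * T ^ μ + ∑ i ∈ Finset.Icc 3 (μ - 1), q i * T ^ i
        + x₂ * T ^ 2 - u * T - x₁ ^ 2 / 4 := funext hP
    rw [heq]
    have h1 : HasDerivAt (fun T : ℝ => δ * T ^ μ) (δ * ((μ : ℝ) * t₂ ^ (μ - 1))) t₂ :=
      (hasDerivAt_pow μ t₂).const_mul δ
    have h2 : HasDerivAt (fun T : ℝ => ∑ i ∈ Finset.Icc 3 (μ - 1), q i * T ^ i)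
        (∑ i ∈ Finset.Icc 3 (μ - 1), q i * ((i : ℝ) * t₂ ^ (i - 1))) t₂ :=
      HasDerivAt.fun_sum fun i _ => (hasDerivAt_pow i t₂).const_mul (q i)
    have h3 : HasDerivAt (fun T : ℝ => x₂ * T ^ 2) (x₂ * (2 * t₂)) t₂ := by
      have := (hasDerivAt_pow 2 t₂).const_mul x₂
      refine this.congr_deriv ?_
      push_cast; ring
    have h4 : HasDerivAt (fun T : ℝ => u * T) u t₂ := by
      simpa using (hasDerivAt_id t₂).const_mul u
    exact (((h1.add h2).add h3).sub h4).sub_const _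
  have hAB : (∑ i ∈ Finset.Icc 3 (μ - 1), q i * t₂ ^ i)
      = (∑ i ∈ Finset.Icc 3 (μ - 1), q i * t₂ ^ (i - 1)) * t₂ := by
    rw [Finset.sum_mul]
    refine Finset.sum_congr rfl fun i hi => ?_
    have h3i : 3 ≤ i := (Finset.mem_Icc.mp hi).1
    have h : i - 1 + 1 = i := by omega
    rw [mul_assoc, ← pow_succ, h]
  have hE : (∑ i ∈ Finset.Icc 3 (μ - 1), q i * ((i : ℝ) * t₂ ^ (i - 1)))
      = (∑ i ∈ Finset.Icc 3 (μ - 1), q i * (((i - 1 : ℕ) : ℝ) * t₂ ^ (i - 1 - 1))) * t₂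
        + ∑ i ∈ Finset.Icc 3 (μ - 1), q i * t₂ ^ (i - 1) := by
    rw [Finset.sum_mul, ← Finset.sum_add_distrib]
    refine Finset.sum_congr rfl fun i hi => ?_
    have h3i : 3 ≤ i := (Finset.mem_Icc.mp hi).1
    obtain ⟨k, rfl⟩ : ∃ k, i = k + 3 := ⟨i - 3, by omega⟩
    have e1 : k + 3 - 1 = k + 2 := by omega
    have e2 : k + 3 - 1 - 1 = k + 1 := by omega
    rw [e2, e1]
    push_cast
    ring
  have hpμ : t₂ ^ μ = t₂ ^ (μ - 1) * t₂ := by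
    rw [← pow_succ]; congr 1; omega
  have hp1 : t₂ ^ (μ - 1) = t₂ ^ (μ - 1 - 1) * t₂ := by
    rw [← pow_succ]; congr 1; omega
  have hcμ : (μ : ℝ) = ((μ - 1 : ℕ) : ℝ) + 1 := by
    rw [Nat.cast_sub (by omega : 1 ≤ μ)]; norm_num
  refine ⟨?_, ?_, ?_⟩
  · rw [hx₁']; field_simp
  · rw [hP, hAB, hx₂', hu', hx₁', hpμ]; ring
  · rw [hdP.deriv, hE, hx₂', hu', hcμ, hp1]; ring
end

section
/- For nonnegative integers i₀, m₁, m₂ with i₀+m₁+m₂ ≥ 1, the quantity (i₀+m₁+m₂-1)! / ((1+i₀+m₁)! · j₁! ⋯ j_l!) with j₁+⋯+j_l = m₂ times ⟨i₀,i₁,…,i_k⟩ (with i₁+⋯+i_k = m₁) equals ⟨i₀,…,i_k,j₁,…,j_l⟩ / ((1+i₀+m₁)·(i₀+m₁+m₂)). -/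
open Finset

/-- The factorial identity behind the term `I₂` of Theorem 2: with `m₁ = Σ i_p`,
`m₂ = Σ j_r`, `i₀ + m₁ + m₂ ≥ 1`,
`(i₀+m₁+m₂-1)!/((1+i₀+m₁)!·j₁!⋯j_l!) · ⟨i₀,i₁,…,i_k⟩
  = ⟨i₀,…,i_k,j₁,…,j_l⟩ / ((1+i₀+m₁)·(i₀+m₁+m₂))`. -/
theorem stmt13 (k l i₀ : ℕ) (i : Fin k → ℕ) (j : Fin l → ℕ)
    (h : 1 ≤ i₀ + ∑ p, i p + ∑ r, j r) :
    ((i₀ + ∑ p, i p + ∑ r, j r - 1).factorial : ℚ) /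
        (((1 + i₀ + ∑ p, i p).factorial : ℚ) * ∏ r, ((j r).factorial : ℚ)) *
      (Nat.multinomial Finset.univ (Fin.cons i₀ i : Fin (k + 1) → ℕ) : ℚ)
    = (Nat.multinomial Finset.univ (Fin.append (Fin.cons i₀ i) j : Fin (k + 1 + l) → ℕ) : ℚ) /
        (((1 + i₀ + ∑ p, i p : ℕ) : ℚ) * ((i₀ + ∑ p, i p + ∑ r, j r : ℕ) : ℚ)) := by
  have hsum1 : ∑ p, (Fin.cons i₀ i : Fin (k+1) → ℕ) p = i₀ + ∑ p, i p := by
    simp [Fin.sum_cons]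
  have hsum2 : ∑ p, (Fin.append (Fin.cons i₀ i) j : Fin (k+1+l) → ℕ) p
      = i₀ + ∑ p, i p + ∑ r, j r := by
    rw [Fin.sum_univ_add]
    simp [Fin.sum_cons]
  have hP : ∏ p : Fin (k+1+l), (Fin.append (Fin.cons i₀ i) j p).factorial
      = (∏ p : Fin (k+1), ((Fin.cons i₀ i : Fin (k+1) → ℕ) p).factorial)
        * ∏ r, (j r).factorial := by
    rw [Fin.prod_univ_add]; simp
  have h1 := Nat.multinomial_spec Finset.univ (Fin.cons i₀ i : Fin (k+1) → ℕ)
  have h2 := Nat.multinomial_spec Finset.univ (Fin.append (Fin.cons i₀ i) j : Fin (k+1+l) → ℕ)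
  rw [hsum1] at h1
  rw [hsum2, hP] at h2
  set S := i₀ + ∑ p, i p with hS
  set m₂ := ∑ r, j r with hm2
  have hN : S + m₂ ≥ 1 := h
  -- cast facts
  have hP1 : ((∏ p : Fin (k+1), ((Fin.cons i₀ i : Fin (k+1) → ℕ) p).factorial : ℕ) : ℚ) ≠ 0 := by
    positivity
  have hP2 : ((∏ r, (j r).factorial : ℕ) : ℚ) ≠ 0 := by positivity
  have hA : (Nat.multinomial Finset.univ (Fin.cons i₀ i : Fin (k+1) → ℕ) : ℚ)
      = (S.factorial : ℚ) / (∏ p : Fin (k+1), ((Fin.cons i₀ i : Fin (k+1) → ℕ) p).factorial : ℕ) := by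
    rw [eq_div_iff hP1, mul_comm]
    exact_mod_cast congrArg (Nat.cast : ℕ → ℚ) h1
  have hB : (Nat.multinomial Finset.univ (Fin.append (Fin.cons i₀ i) j : Fin (k+1+l) → ℕ) : ℚ)
      = ((S + m₂).factorial : ℚ)
        / (((∏ p : Fin (k+1), ((Fin.cons i₀ i : Fin (k+1) → ℕ) p).factorial : ℕ) : ℚ)
          * ((∏ r, (j r).factorial : ℕ) : ℚ)) := by
    rw [eq_div_iff (by positivity), mul_comm]
    exact_mod_cast congrArg (Nat.cast : ℕ → ℚ) h2
  have hfac1 : ((1 + S).factorial : ℚ) = ((1 + S : ℕ) : ℚ) * S.factorial := by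
    rw [add_comm 1 S, Nat.factorial_succ]; push_cast; ring
  have hfac2 : ((S + m₂).factorial : ℚ) = ((S + m₂ : ℕ) : ℚ) * ((S + m₂ - 1).factorial : ℚ) := by
    exact_mod_cast congrArg (Nat.cast : ℕ → ℚ) (Nat.mul_factorial_pred (Nat.one_le_iff_ne_zero.mp hN)).symm
  have hprodcast : (∏ r, ((j r).factorial : ℚ)) = ((∏ r, (j r).factorial : ℕ) : ℚ) := by
    push_cast; ring
  have hrw : 1 + i₀ + ∑ p, i p = 1 + S := by rw [hS, add_assoc]
  rw [hrw, hA, hB, hprodcast, hfac1, hfac2]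
  have hSnz : ((1 + S : ℕ) : ℚ) ≠ 0 := by positivity
  have hNnz : ((S + m₂ : ℕ) : ℚ) ≠ 0 := by
    have : 0 < S + m₂ := hN
    exact_mod_cast Nat.cast_ne_zero.mpr this.ne'
  generalize ((S + m₂ - 1).factorial : ℚ) = a at *
  generalize hf : (S.factorial : ℚ) = f at *
  generalize ((∏ p : Fin (k+1), ((Fin.cons i₀ i : Fin (k+1) → ℕ) p).factorial : ℕ) : ℚ) = p1 at *
  generalize ((∏ r, (j r).factorial : ℕ) : ℚ) = p2 at *
  generalize ((1 + S : ℕ) : ℚ) = n1 at *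
  generalize ((S + m₂ : ℕ) : ℚ) = n2 at *
  have hfnz : f ≠ 0 := by
    rw [← hf]; positivity
  field_simp
end
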